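/- arXiv:2310.07922 — 2 statements merged into one kernel-verified Lean document; each statement's English description precedes it below -/
import Mathlib

section
/- Let h : ℝⁿ → ℝ be G-Lipschitz and μ-sharp with minimizer set X⋆ and minimum value 0, i.e., h(x) ≥ μ · dist(x, X⋆) for all x. Suppose the iterate x⁺ satisfies (i) ‖x⁺ − x⋆‖² ≤ ‖x − x⋆‖² − ‖x − x⁺‖² for every x⋆ ∈ X⋆, and (ii) G‖x⁺ − x‖ ≥ h(x). Then dist(x⁺, X⋆)² ≤ (1 − μ²/G²) · dist(x, X⋆)². -/
theorem stmt_8 {n : ℕ} (h : EuclideanSpace ℝ (Fin n) → ℝ)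
    (Xstar : Set (EuclideanSpace ℝ (Fin n)))
    (G μ : ℝ) (hne : Xstar.Nonempty) (hcl : IsClosed Xstar)
    (hμ : 0 < μ) (hμG : μ ≤ G)
    (hmin : ∀ xs ∈ Xstar, h xs = 0)
    (hlip : ∀ a b, |h a - h b| ≤ G * ‖a - b‖)
    (hsharp : ∀ x, μ * Metric.infDist x Xstar ≤ h x)
    (x xplus : EuclideanSpace ℝ (Fin n))
    (hfejer : ∀ xs ∈ Xstar, ‖xplus - xs‖ ^ 2 ≤ ‖x - xs‖ ^ 2 - ‖x - xplus‖ ^ 2)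
    (hdec : h x ≤ G * ‖xplus - x‖) :
    Metric.infDist xplus Xstar ^ 2 ≤ (1 - μ ^ 2 / G ^ 2) * Metric.infDist x Xstar ^ 2 := by
  obtain ⟨xs, hxs, hd⟩ := hcl.exists_infDist_eq_dist hne x
  have hG : 0 < G := lt_of_lt_of_le hμ hμG
  have h1 : Metric.infDist xplus Xstar ≤ ‖xplus - xs‖ := by
    simpa [dist_eq_norm] using Metric.infDist_le_dist_of_mem (x := xplus) hxs
  have h2 := hfejer xs hxs
  have hdx : Metric.infDist x Xstar = ‖x - xs‖ := by
    simpa [dist_eq_norm] using hd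
  have h0 : 0 ≤ Metric.infDist xplus Xstar := Metric.infDist_nonneg
  have h0x : 0 ≤ Metric.infDist x Xstar := Metric.infDist_nonneg
  have h3 : μ * Metric.infDist x Xstar ≤ G * ‖x - xplus‖ := by
    calc μ * Metric.infDist x Xstar ≤ h x := hsharp x
      _ ≤ G * ‖xplus - x‖ := hdec
      _ = G * ‖x - xplus‖ := by rw [norm_sub_rev]
  have hsq : Metric.infDist xplus Xstar ^ 2 ≤ ‖xplus - xs‖ ^ 2 := by
    exact pow_le_pow_left₀ h0 h1 2
  have key : (μ * Metric.infDist x Xstar) ^ 2 ≤ (G * ‖x - xplus‖) ^ 2 := by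
    apply pow_le_pow_left₀ _ h3 2
    positivity
  rw [hdx] at *
  have hGne : G ^ 2 ≠ 0 := by positivity
  have : Metric.infDist xplus Xstar ^ 2 ≤ ‖x - xs‖ ^ 2 - (μ ^ 2 / G ^ 2) * ‖x - xs‖ ^ 2 := by
    have hnn : (μ ^ 2 / G ^ 2) * ‖x - xs‖ ^ 2 ≤ ‖x - xplus‖ ^ 2 := by
      rw [div_mul_eq_mul_div, div_le_iff₀ (by positivity)]
      nlinarith [key]
    nlinarith [hsq, h2, hnn]
  linarith [this]
end

section
/- Let φ : ℝᵏ → ℝ be convex and nondecreasing in each argument, and let ψ₁, ..., ψₖ : ℝⁿ → ℝ be convex. Suppose φ̂ is a minorant of φ at the point w = (ψ₁(z), ..., ψₖ(z)) that is also nondecreasing in each argument, and ψ̂ᵢ is a minorant of ψᵢ at z for each i. Then x ↦ φ̂(ψ̂₁(x), ..., ψ̂ₖ(x)) is a minorant of x ↦ φ(ψ₁(x), ..., ψₖ(x)) at z. -/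
theorem stmt_19 {n k : ℕ} (φ φhat : (Fin k → ℝ) → ℝ)
    (ψ ψhat : Fin k → EuclideanSpace ℝ (Fin n) → ℝ)
    (z : EuclideanSpace ℝ (Fin n))
    (hφconv : ConvexOn ℝ Set.univ φ) (hφmono : Monotone φ)
    (hψconv : ∀ i, ConvexOn ℝ Set.univ (ψ i))
    (hφhatconv : ConvexOn ℝ Set.univ φhat) (hφhatmono : Monotone φhat)
    (hφhatle : ∀ w, φhat w ≤ φ w)
    (hφhateq : φhat (fun i => ψ i z) = φ (fun i => ψ i z))
    (hψhatconv : ∀ i, ConvexOn ℝ Set.univ (ψhat i))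
    (hψhatle : ∀ i x, ψhat i x ≤ ψ i x)
    (hψhateq : ∀ i, ψhat i z = ψ i z) :
    ConvexOn ℝ Set.univ (fun x => φhat (fun i => ψhat i x)) ∧
      (∀ x, φhat (fun i => ψhat i x) ≤ φ (fun i => ψ i x)) ∧
      φhat (fun i => ψhat i z) = φ (fun i => ψ i z) := by
  refine ⟨⟨convex_univ, ?_⟩, ?_, ?_⟩
  · intro x _ y _ a b ha hb hab
    calc φhat (fun i => ψhat i (a • x + b • y))
        ≤ φhat (fun i => a * ψhat i x + b * ψhat i y) := by
          apply hφhatmono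
          intro i
          exact (hψhatconv i).2 (Set.mem_univ x) (Set.mem_univ y) ha hb hab
      _ = φhat (a • (fun i => ψhat i x) + b • (fun i => ψhat i y)) := by
          congr 1
      _ ≤ a • φhat (fun i => ψhat i x) + b • φhat (fun i => ψhat i y) :=
          hφhatconv.2 (Set.mem_univ _) (Set.mem_univ _) ha hb hab
  · intro x
    calc φhat (fun i => ψhat i x) ≤ φhat (fun i => ψ i x) :=
          hφhatmono (fun i => hψhatle i x)
      _ ≤ φ (fun i => ψ i x) := hφhatle _
  · have : (fun i => ψhat i z) = (fun i => ψ i z) := funext fun i => hψhateq i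
    rw [this, hφhateq]
end
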